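/- For all positive reals a, b: 7 S(a,b) ≤ 4 C(a,b) + 3 N(a,b). -/

import Mathlib

noncomputable def meanA (a b : ℝ) : ℝ := (a + b) / 2
noncomputable def meanG (a b : ℝ) : ℝ := Real.sqrt (a * b)
noncomputable def meanH (a b : ℝ) : ℝ := 2 * a * b / (a + b)
noncomputable def meanN (a b : ℝ) : ℝ := (a + Real.sqrt (a * b) + b) / 3
noncomputable def meanC (a b : ℝ) : ℝ := (a ^ 2 + b ^ 2) / (a + b)
noncomputable def meanS (a b : ℝ) : ℝ := Real.sqrt ((a ^ 2 + b ^ 2) / 2)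
noncomputable def meanR (a b : ℝ) : ℝ := 2 * (a ^ 2 + a * b + b ^ 2) / (3 * (a + b))
noncomputable def triDelta (a b : ℝ) : ℝ := (a - b) ^ 2 / (a + b)
noncomputable def hellinger (a b : ℝ) : ℝ := (Real.sqrt a - Real.sqrt b) ^ 2 / 2

theorem stmt_11 (a b : ℝ) (ha : 0 < a) (hb : 0 < b) :
    7 * meanS a b ≤ 4 * meanC a b + 3 * meanN a b := by
  unfold meanS meanC meanN
  set s := Real.sqrt ((a ^ 2 + b ^ 2) / 2) with hsdef
  set g := Real.sqrt (a * b) with hgdef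
  set t := a + b with htdef
  have ht : 0 < t := by positivity
  have hs : 0 ≤ s := Real.sqrt_nonneg _
  have hg : 0 ≤ g := Real.sqrt_nonneg _
  have hs2 : s ^ 2 = (a ^ 2 + b ^ 2) / 2 := Real.sq_sqrt (by positivity)
  have hg2 : g ^ 2 = a * b := Real.sq_sqrt (by positivity)
  have ht2 : t ^ 2 = 2 * s ^ 2 + 2 * g ^ 2 := by
    rw [hs2, hg2]; ring
  have key : 7 * s * t ≤ 8 * s ^ 2 + t ^ 2 + g * t := by
    rcases le_or_gt (7 * s) g with h | h
    · nlinarith [mul_le_mul_of_nonneg_right h ht.le, sq_nonneg s, sq_nonneg t]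
    · have hY : 0 ≤ (7 * s - g) * t := mul_nonneg (by linarith) ht.le
      have hX : 0 < 8 * s ^ 2 + t ^ 2 := by positivity
      have hsq : ((7 * s - g) * t) ^ 2 ≤ (8 * s ^ 2 + t ^ 2) ^ 2 := by
        nlinarith [sq_nonneg (s - g), mul_nonneg hs hg,
          mul_nonneg (sq_nonneg (s - g)) (mul_nonneg hs hg), sq_nonneg (s + g)]
      nlinarith [hsq, hY, hX]
  have hc : (a ^ 2 + b ^ 2) / t * t = 2 * s ^ 2 := by
    rw [div_mul_cancel₀ _ ht.ne', hs2]; ring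
  have hgoal : 7 * s ≤ 4 * ((a ^ 2 + b ^ 2) / t) + 3 * ((a + g + b) / 3) := by
    have : (a + g + b) / 3 * 3 = t + g := by ring
    nlinarith [key, hc, ht, mul_pos ht ht]
  linarith [hgoal]
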